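/- Let f : P → Q be a contraction between finite connected posets, and for each q ∈ Q let W_q be a finite connected poset and h_q : f⁻¹(q) → W_q a contraction (where the fibre f⁻¹(q) carries the order induced from P). Then there is a unique partial order on the set W := Σ_{q∈Q} W_q such that: (i) the map h : P → W sending p (with f(p) = q) to (q, h_q(p)) is a contraction; (ii) the map g : W → Q, (q, w) ↦ q, is a contraction; (iii) g ∘ h = f; and (iv) for each q ∈ Q the inclusion W_q → W, w ↦ (q, w), is a convex order-embedding. Moreover, with this order W is connected. -/

import Mathlib

set_option linter.unusedSectionVars false

section Defs

variable {α β : Type*}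

/-- `f` is monotone from the relation `r` to the relation `s`. -/
def Mono (r : α → α → Prop) (s : β → β → Prop) (f : α → β) : Prop :=
  ∀ a b, r a b → s (f a) (f b)

/-- A monotone map `f` is convex if whenever `f x ≤ w ≤ f y` there is a unique
`p` with `x ≤ p ≤ y` and `f p = w`. -/
def ConvexMap (r : α → α → Prop) (s : β → β → Prop) (f : α → β) : Prop :=
  Mono r s f ∧ ∀ x y w, s (f x) w → s w (f y) → ∃! p, r x p ∧ r p y ∧ f p = w

/-- A subset `S` is connected (w.r.t. the order relation `r`) if any two of its
elements are joined by a finite zigzag of comparable pairs lying in `S`. -/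
def ConnectedIn (r : α → α → Prop) (S : Set α) : Prop :=
  ∀ x ∈ S, ∀ y ∈ S,
    Relation.ReflTransGen (fun a b => a ∈ S ∧ b ∈ S ∧ (r a b ∨ r b a)) x y

/-- A subset `S` is order-convex w.r.t. `r`. -/
def OrdConvexIn (r : α → α → Prop) (S : Set α) : Prop :=
  ∀ x ∈ S, ∀ y ∈ S, ∀ z, r x z → r z y → z ∈ S

/-- The strict relation associated to `r`. -/
def LtRel (r : α → α → Prop) (a b : α) : Prop := r a b ∧ ¬ r b a

/-- `b` covers `a` w.r.t. `r`. -/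
def CovRel (r : α → α → Prop) (a b : α) : Prop :=
  LtRel r a b ∧ ∀ c, ¬ (LtRel r a c ∧ LtRel r c b)

/-- A contraction: a monotone surjection with connected convex fibres that lifts covers. -/
def IsContraction (r : α → α → Prop) (s : β → β → Prop) (f : α → β) : Prop :=
  Mono r s f ∧ Function.Surjective f ∧
  (∀ q, ConnectedIn r (f ⁻¹' {q}) ∧ OrdConvexIn r (f ⁻¹' {q})) ∧
  ∀ q q', CovRel s q q' → ∃ p p', CovRel r p p' ∧ f p = q ∧ f p' = q'

/-- A collapse map: a monotone surjection which partially reflects the strict order. -/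
def IsCollapse (r : α → α → Prop) (s : β → β → Prop) (f : α → β) : Prop :=
  Mono r s f ∧ Function.Surjective f ∧ ∀ x y, LtRel s (f x) (f y) → LtRel r x y

/-- `r` is a partial order relation. -/
def IsPartialOrderRel (r : α → α → Prop) : Prop :=
  (∀ a, r a a) ∧ (∀ a b c, r a b → r b c → r a c) ∧ (∀ a b, r a b → r b a → a = b)

/-- `r` is a preorder relation. -/
def IsPreorderRel (r : α → α → Prop) : Prop :=
  (∀ a, r a a) ∧ ∀ a b c, r a b → r b c → r a c

/-- The symmetrization `x ∼ y` of a preorder relation. -/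
def Sim (r : α → α → Prop) (x y : α) : Prop := r x y ∧ r y x

/-- The quotient preorder `T/T'`: the transitive closure of
`x R y ⟺ (x ≤_T y or y ≤_{T'} x)`. -/
def QuotRel (r r' : α → α → Prop) : α → α → Prop :=
  Relation.TransGen (fun x y => r x y ∨ r' y x)

/-- The identity-on-objects monotone map of preorders `T' → T` is admissible. -/
def Admissible (r' r : α → α → Prop) : Prop :=
  (∀ x y, r' x y → r x y) ∧
  (∀ Y : Set α, ConnectedIn r' Y → ∀ x ∈ Y, ∀ y ∈ Y, (r x y ↔ r' x y)) ∧
  (∀ x y, Sim (QuotRel r r') x y ↔ Sim (QuotRel r' r') x y)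

/-- The identity-on-objects monotone map of preorders `T → V` is a contraction of preorders. -/
def PreContraction (r v : α → α → Prop) : Prop :=
  (∀ x y, r x y → v x y) ∧
  (∀ x, ConnectedIn r {y | Sim v x y}) ∧
  ∀ a a', CovRel v a a' → ∃ t t', CovRel r t t' ∧ t = a ∧ t' = a'

/-- The setoid on `α` whose relation is the symmetrization of the preorder relation `r`. -/
def simSetoid (r : α → α → Prop) (h : IsPreorderRel r) : Setoid α where
  r := Sim r
  iseqv := ⟨fun x => ⟨h.1 x, h.1 x⟩, fun hxy => ⟨hxy.2, hxy.1⟩,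
    fun h1 h2 => ⟨h.2 _ _ _ h1.1 h2.1, h.2 _ _ _ h2.2 h1.2⟩⟩

/-- The partial order relation on the posetification (antisymmetrization) of a preorder. -/
def posetLe (r : α → α → Prop) (h : IsPreorderRel r) :
    Quotient (simSetoid r h) → Quotient (simSetoid r h) → Prop :=
  Quotient.lift₂ r (fun _ _ _ _ hx hy => propext
    ⟨fun hr => h.2 _ _ _ (h.2 _ _ _ hx.2 hr) hy.1,
     fun hr => h.2 _ _ _ (h.2 _ _ _ hx.1 hr) hy.2⟩)

/-- A tree: a poset with a greatest element in which every interval is linearly ordered. -/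
def IsTreeRel (r : α → α → Prop) : Prop :=
  (∃ t, ∀ p, r p t) ∧
  ∀ p p' z w, r p z → r z p' → r p w → r w p' → (r z w ∨ r w z)

/-- The connected component of `p` w.r.t. the order relation `r`. -/
def component (r : α → α → Prop) (p : α) : Set α :=
  {q | Relation.ReflTransGen (fun a b => r a b ∨ r b a) p q}

/-- A forest: a poset each of whose connected components is a tree. -/
def IsForestRel (r : α → α → Prop) : Prop :=
  ∀ p, IsTreeRel (fun a b : component r p => r a.1 b.1)

end Defs

/-- The conditions required of the glued partial order `le` on `W = Σ q, W q`. -/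
def GlueContractionProp {P Q : Type*} [PartialOrder P] [PartialOrder Q]
    (f : P → Q) (W : Q → Type*) [∀ q, PartialOrder (W q)]
    (hmap : ∀ q, {p : P // f p = q} → W q)
    (le : ((q : Q) × W q) → ((q : Q) × W q) → Prop) : Prop :=
  IsPartialOrderRel le ∧
  -- (i) `h : P → W`, `p ↦ (f p, h_{f p} p)` is a contraction
  IsContraction (fun a b : P => a ≤ b) le
    (fun p => ⟨f p, hmap (f p) ⟨p, rfl⟩⟩) ∧
  -- (ii) `g : W → Q`, `(q, w) ↦ q` is a contraction
  IsContraction le (fun a b : Q => a ≤ b) (fun w => w.1) ∧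
  -- (iii) `g ∘ h = f`
  (∀ p : P, (show (q : Q) × W q from ⟨f p, hmap (f p) ⟨p, rfl⟩⟩).1 = f p) ∧
  -- (iv) each inclusion `W q → W` is a convex order-embedding
  ∀ q : Q, ConvexMap (fun a b : W q => a ≤ b) le
      (fun w => (⟨q, w⟩ : (q : Q) × W q)) ∧
    ∀ w w' : W q, le ⟨q, w⟩ ⟨q, w'⟩ ↔ w ≤ w'

/- ============ Auxiliary general lemmas ============ -/

section Aux

variable {α β : Type*}

theorem ltRel_trans' {r : α → α → Prop} (hr : IsPartialOrderRel r)
    {a b c : α} (h1 : LtRel r a b) (h2 : LtRel r b c) : LtRel r a c :=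
  ⟨hr.2.1 _ _ _ h1.1 h2.1, fun hca => h2.2 (hr.2.1 _ _ _ hca h1.1)⟩

theorem ltRel_irrefl' {r : α → α → Prop} (a : α) : ¬ LtRel r a a :=
  fun h => h.2 h.1

theorem ltRel_of_ne {r : α → α → Prop} (hr : IsPartialOrderRel r)
    {a b : α} (hab : r a b) (hne : a ≠ b) : LtRel r a b :=
  ⟨hab, fun hba => hne (hr.2.2 _ _ hab hba)⟩

/-- In a finite poset, any strict relation decomposes into covers. -/
theorem ltRel_transGen_covRel [Finite α] {r : α → α → Prop}
    (hr : IsPartialOrderRel r) :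
    ∀ {a b : α}, LtRel r a b → Relation.TransGen (CovRel r) a b := by
  have htrans : IsTrans α (LtRel r) := ⟨fun _ _ _ => ltRel_trans' hr⟩
  have hirr : IsIrrefl α (LtRel r) := ⟨ltRel_irrefl'⟩
  have hwf : WellFounded (LtRel r) := Finite.wellFounded_of_trans_of_irrefl _
  intro a b hab
  induction b using hwf.induction generalizing a with
  | _ b IH =>
    have hwf' : WellFounded (flip (LtRel r)) := by
      have : IsTrans α (flip (LtRel r)) := ⟨fun _ _ _ h1 h2 => ltRel_trans' hr h2 h1⟩
      have : IsIrrefl α (flip (LtRel r)) := ⟨ltRel_irrefl'⟩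
      exact Finite.wellFounded_of_trans_of_irrefl _
    obtain ⟨m, hmS, hmax⟩ := hwf'.has_min {c | r a c ∧ LtRel r c b} ⟨a, hr.1 a, hab⟩
    have hcov : CovRel r m b := by
      refine ⟨hmS.2, fun c ⟨hmc, hcb⟩ => ?_⟩
      exact hmax c ⟨hr.2.1 _ _ _ hmS.1 hmc.1, hcb⟩ hmc
    rcases eq_or_ne a m with rfl | hne
    · exact Relation.TransGen.single hcov
    · exact (IH m hmS.2 (ltRel_of_ne hr hmS.1 hne)).tail hcov

/-- In a finite poset, `r a b` iff `a = b` or a chain of covers. -/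
theorem rel_reflTransGen_covRel [Finite α] {r : α → α → Prop}
    (hr : IsPartialOrderRel r) {a b : α} (hab : r a b) :
    Relation.ReflTransGen (CovRel r) a b := by
  rcases eq_or_ne a b with rfl | hne
  · exact Relation.ReflTransGen.refl
  · exact (ltRel_transGen_covRel hr (ltRel_of_ne hr hab hne)).to_reflTransGen

theorem partialOrderRel_le {γ : Type*} [PartialOrder γ] :
    IsPartialOrderRel (fun a b : γ => a ≤ b) :=
  ⟨fun a => le_refl a, fun _ _ _ => le_trans, fun _ _ => le_antisymm⟩

theorem sigma_mk_inj {Q : Type*} {W : Q → Type*} {q : Q} {a b : W q}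
    (h : (⟨q, a⟩ : (q : Q) × W q) = ⟨q, b⟩) : a = b := by
  simpa using h

end Aux

section Glue

variable {P Q : Type*} [PartialOrder P] [PartialOrder Q]
  (f : P → Q) (W : Q → Type*) [∀ q, PartialOrder (W q)]
  (hmap : ∀ q, {p : P // f p = q} → W q)

/-- The glueing map `h : P → Σ q, W q`. -/
def hFun : P → (q : Q) × W q := fun p => ⟨f p, hmap (f p) ⟨p, rfl⟩⟩

/-- The cover-image relation generating the glued order. -/
def R1 (x y : (q : Q) × W q) : Prop :=
  ∃ p p', CovRel (fun a b : P => a ≤ b) p p' ∧ hFun f W hmap p = x ∧ hFun f W hmap p' = y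

/-- The glued order. -/
def le0 : ((q : Q) × W q) → ((q : Q) × W q) → Prop :=
  Relation.ReflTransGen (R1 f W hmap)

theorem hFun_eq (p : P) (q : Q) (e : f p = q) :
    hFun f W hmap p = ⟨q, hmap q ⟨p, e⟩⟩ := by
  subst e; rfl

theorem hFun_fst (p : P) : (hFun f W hmap p).1 = f p := rfl

end Glue

section Main

variable {P Q : Type*} [PartialOrder P] [PartialOrder Q]
  {f : P → Q}
  (hf : IsContraction (fun a b : P => a ≤ b) (fun a b : Q => a ≤ b) f)
  {W : Q → Type*} [∀ q, PartialOrder (W q)]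
  {hmap : ∀ q, {p : P // f p = q} → W q}
  (hcontr : ∀ q, IsContraction (fun a b : {p : P // f p = q} => a.1 ≤ b.1)
      (fun a b : W q => a ≤ b) (hmap q))

include hf in
theorem R1_fst {x y : (q : Q) × W q} (h : R1 f W hmap x y) : x.1 ≤ y.1 := by
  obtain ⟨p, p', cov, rfl, rfl⟩ := h
  exact hf.1 _ _ cov.1.1

include hf in
theorem le0_fst {x y : (q : Q) × W q} (h : le0 f W hmap x y) : x.1 ≤ y.1 := by
  induction h with
  | refl => exact le_rfl
  | tail _ hstep ih => exact le_trans ih (R1_fst hf hstep)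

/-- `h` is monotone into the glued order. -/
theorem hFun_mono [Finite P] {p p' : P} (h : p ≤ p') :
    le0 f W hmap (hFun f W hmap p) (hFun f W hmap p') := by
  have := rel_reflTransGen_covRel (partialOrderRel_le (γ := P)) h
  exact Relation.ReflTransGen.lift (hFun f W hmap)
    (fun a b hab => ⟨a, b, hab, rfl, rfl⟩) _ _ this

include hcontr in
theorem R1_fiber {q : Q} {a b : W q} (h : R1 f W hmap ⟨q, a⟩ ⟨q, b⟩) : a ≤ b := by
  obtain ⟨p, p', cov, h1, h2⟩ := h
  have e : f p = q := congrArg Sigma.fst h1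
  have e' : f p' = q := congrArg Sigma.fst h2
  have ha : hmap q ⟨p, e⟩ = a := sigma_mk_inj ((hFun_eq f W hmap p q e).symm.trans h1)
  have hb : hmap q ⟨p', e'⟩ = b := sigma_mk_inj ((hFun_eq f W hmap p' q e').symm.trans h2)
  have := (hcontr q).1 ⟨p, e⟩ ⟨p', e'⟩ cov.1.1
  rwa [ha, hb] at this

include hf hcontr in
theorem le0_fiber {q : Q} {w' : W q} :
    ∀ {x : (q : Q) × W q}, le0 f W hmap x ⟨q, w'⟩ → ∀ w, x = ⟨q, w⟩ → w ≤ w' := by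
  intro x hx
  induction hx using Relation.ReflTransGen.head_induction_on with
  | refl =>
    intro w hw
    have : w' = w := sigma_mk_inj hw
    exact this ▸ le_rfl
  | head hstep hrest ih =>
    rename_i a c
    intro w hw
    subst hw
    obtain ⟨c1, c2⟩ := c
    have e1 : q ≤ c1 := R1_fst hf hstep
    have e2 : c1 ≤ q := le0_fst hf hrest
    have e : c1 = q := le_antisymm e2 e1
    subst e
    exact le_trans (R1_fiber hcontr hstep) (ih c2 rfl)

include hf hcontr in
theorem le0_partial : IsPartialOrderRel (le0 f W hmap) := by
  refine ⟨fun a => Relation.ReflTransGen.refl,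
    fun a b c => Relation.ReflTransGen.trans, fun x y hxy hyx => ?_⟩
  obtain ⟨q1, x2⟩ := x
  obtain ⟨q2, y2⟩ := y
  have e : q1 = q2 := le_antisymm (le0_fst hf hxy) (le0_fst hf hyx)
  subst e
  have h1 : x2 ≤ y2 := le0_fiber hf hcontr hxy x2 rfl
  have h2 : y2 ≤ x2 := le0_fiber hf hcontr hyx y2 rfl
  rw [le_antisymm h1 h2]

include hcontr in
/-- The inclusion of each fibre is monotone into the glued order. -/
theorem le0_of_fiber_le [Finite P] {q : Q} {a b : W q} [Finite (W q)] (h : a ≤ b) :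
    le0 f W hmap ⟨q, a⟩ ⟨q, b⟩ := by
  have hch := rel_reflTransGen_covRel (partialOrderRel_le (γ := W q)) h
  have key : ∀ u v : W q, CovRel (fun a b : W q => a ≤ b) u v →
      le0 f W hmap ⟨q, u⟩ ⟨q, v⟩ := by
    intro u v hcov
    obtain ⟨t, t', hcov', ht, ht'⟩ := (hcontr q).2.2.2 u v hcov
    have h1 : le0 f W hmap (hFun f W hmap t.1) (hFun f W hmap t'.1) :=
      hFun_mono hcov'.1.1
    rwa [hFun_eq f W hmap t.1 q t.2, hFun_eq f W hmap t'.1 q t'.2, ht, ht'] at h1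
  have := Relation.ReflTransGen.lift (fun w : W q => (⟨q, w⟩ : (q : Q) × W q)) key _ _ hch
  rw [show Relation.ReflTransGen (le0 f W hmap) = le0 f W hmap from
    (by
      haveI : Std.Refl (le0 f W hmap) := ⟨fun a => Relation.ReflTransGen.refl⟩
      haveI : IsTrans _ (le0 f W hmap) := ⟨fun a b c => Relation.ReflTransGen.trans⟩
      exact Relation.reflTransGen_eq_self)] at this
  exact this

end Main

/-- gluing contractions over the fibres of a contraction of finite
connected posets: existence and uniqueness of the partial order on `Σ q, W q`,
and connectedness of the result. -/
theorem glue_contractions_unique_order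
    {P Q : Type*} [PartialOrder P] [PartialOrder Q] [Fintype P] [Fintype Q]
    (hPconn : ConnectedIn (fun a b : P => a ≤ b) Set.univ)
    (hQconn : ConnectedIn (fun a b : Q => a ≤ b) Set.univ)
    (f : P → Q)
    (hf : IsContraction (fun a b : P => a ≤ b) (fun a b : Q => a ≤ b) f)
    (W : Q → Type*) [∀ q, PartialOrder (W q)] [∀ q, Fintype (W q)]
    (hWconn : ∀ q, ConnectedIn (fun a b : W q => a ≤ b) Set.univ)
    (hmap : ∀ q, {p : P // f p = q} → W q)
    (hcontr : ∀ q, IsContraction (fun a b : {p : P // f p = q} => a.1 ≤ b.1)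
      (fun a b : W q => a ≤ b) (hmap q)) :
    (∃! le : ((q : Q) × W q) → ((q : Q) × W q) → Prop,
        GlueContractionProp f W hmap le) ∧
    ∀ le : ((q : Q) × W q) → ((q : Q) × W q) → Prop,
      GlueContractionProp f W hmap le → ConnectedIn le Set.univ := by
  classical
  set L := le0 f W hmap with hL
  have hPO : IsPartialOrderRel L := le0_partial hf hcontr
  -- fibre membership characterization for hFun
  have hmem : ∀ (p : P) (q : Q) (w : W q), hFun f W hmap p = ⟨q, w⟩ ↔
      ∃ e : f p = q, hmap q ⟨p, e⟩ = w := by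
    intro p q w
    constructor
    · intro h
      have e : f p = q := congrArg Sigma.fst h
      exact ⟨e, sigma_mk_inj ((hFun_eq f W hmap p q e).symm.trans h)⟩
    · rintro ⟨e, rfl⟩
      exact hFun_eq f W hmap p q e
  -- covers of L are generated by R1
  have hcovR1 : ∀ x y, CovRel L x y → R1 f W hmap x y := by
    intro x y hcov
    have hne : x ≠ y := by rintro rfl; exact ltRel_irrefl' x hcov.1
    have htg : Relation.TransGen (R1 f W hmap) x y := by
      rcases Relation.reflTransGen_iff_eq_or_transGen.mp hcov.1.1 with he | htg
      · exact absurd he.symm hne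
      · exact htg
    have extract : ∀ a, Relation.TransGen (R1 f W hmap) a y → x = a →
        R1 f W hmap x y := by
      intro a ha
      induction ha using Relation.TransGen.head_induction_on with
      | single h =>
        rename_i a'
        intro he; subst he; exact h
      | head h' h ihh =>
        rename_i a' c
        intro he; subst he
        by_cases hcx : x = c
        · exact ihh hcx
        · by_cases hcy : c = y
          · subst hcy; exact h'
          · exfalso
            have h1 : LtRel L x c :=
              ⟨Relation.ReflTransGen.single h', fun hcx' =>
                hcx (hPO.2.2 _ _ hcx' (Relation.ReflTransGen.single h')).symm⟩
            have h2 : LtRel L c y :=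
              ⟨Relation.TransGen.to_reflTransGen h, fun hyc =>
                hcy (hPO.2.2 _ _ (Relation.TransGen.to_reflTransGen h) hyc)⟩
            exact hcov.2 c ⟨h1, h2⟩
    exact extract x htg rfl
  -- L-cover chains collapse to L
  have covle : ∀ {u v}, Relation.TransGen (CovRel L) u v → L u v := by
    intro u v h
    have := Relation.TransGen.lift (id : ((q : Q) × W q) → _)
      (fun a b hab => hab.1.1) _ _ h
    have h2 := Relation.TransGen.to_reflTransGen this
    haveI : Std.Refl L := ⟨hPO.1⟩
    haveI : IsTrans _ L := ⟨fun a b c => hPO.2.1 a b c⟩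
    exact Relation.reflTransGen_eq_self (r := L) ▸ h2
  -- h is a contraction w.r.t. L
  have hHcontr : IsContraction (fun a b : P => a ≤ b) L
      (fun p => ⟨f p, hmap (f p) ⟨p, rfl⟩⟩) := by
    refine ⟨fun a b hab => hFun_mono hab, ?_, ?_, ?_⟩
    · rintro ⟨q, w⟩
      obtain ⟨t, ht⟩ := (hcontr q).2.1 w
      exact ⟨t.1, (hmem t.1 q w).mpr ⟨t.2, ht⟩⟩
    · rintro ⟨q, w⟩
      constructor
      · -- connectedness of the fibre
        intro p hp p' hp'
        obtain ⟨e, he⟩ := (hmem p q w).mp hp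
        obtain ⟨e', he'⟩ := (hmem p' q w).mp hp'
        have hz := ((hcontr q).2.2.1 w).1 ⟨p, e⟩ he ⟨p', e'⟩ he'
        exact Relation.ReflTransGen.lift (Subtype.val)
          (fun a b hab =>
            ⟨(hmem a.1 q w).mpr ⟨a.2, hab.1⟩,
              (hmem b.1 q w).mpr ⟨b.2, hab.2.1⟩, hab.2.2⟩) _ _ hz
      · -- convexity of the fibre
        intro p hp p' hp' z hpz hzp'
        obtain ⟨e, he⟩ := (hmem p q w).mp hp
        obtain ⟨e', he'⟩ := (hmem p' q w).mp hp'
        have ez : f z = q := le_antisymm (e' ▸ hf.1 _ _ hzp') (e ▸ hf.1 _ _ hpz)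
        have h1 : hmap q ⟨p, e⟩ ≤ hmap q ⟨z, ez⟩ := (hcontr q).1 _ _ hpz
        have h2 : hmap q ⟨z, ez⟩ ≤ hmap q ⟨p', e'⟩ := (hcontr q).1 _ _ hzp'
        have : hmap q ⟨z, ez⟩ = w := le_antisymm (he' ▸ h2) (he ▸ h1)
        exact (hmem z q w).mpr ⟨ez, this⟩
    · intro x y hcov
      obtain ⟨p, p', hc, h1, h2⟩ := hcovR1 x y hcov
      exact ⟨p, p', hc, h1, h2⟩
  -- g is a contraction w.r.t. L
  have hGcontr : IsContraction L (fun a b : Q => a ≤ b)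
      (fun w : (q : Q) × W q => w.1) := by
    refine ⟨fun a b hab => le0_fst hf hab, ?_, ?_, ?_⟩
    · intro q
      obtain ⟨p, rfl⟩ := hf.2.1 q
      exact ⟨hFun f W hmap p, rfl⟩
    · intro q
      constructor
      · rintro ⟨q1, w⟩ hx ⟨q2, w'⟩ hy
        obtain rfl : q = q1 := hx.symm
        obtain rfl : q = q2 := hy.symm
        have hz := hWconn q w (Set.mem_univ _) w' (Set.mem_univ _)
        exact Relation.ReflTransGen.lift
          (fun a : W q => (⟨q, a⟩ : (q : Q) × W q))
          (fun a b hab => ⟨rfl, rfl, by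
            rcases hab.2.2 with h | h
            · exact Or.inl (le0_of_fiber_le hcontr h)
            · exact Or.inr (le0_of_fiber_le hcontr h)⟩) _ _ hz
      · intro x hx y hy z hxz hzy
        have e1 : x.1 = q := hx
        have e2 : y.1 = q := hy
        exact le_antisymm (e2 ▸ le0_fst hf hzy) (e1 ▸ le0_fst hf hxz)
    · intro q q' hcovQ
      obtain ⟨p, p', covP, e, e'⟩ := hf.2.2.2 q q' hcovQ
      have hneQ : q ≠ q' := by
        rintro rfl; exact ltRel_irrefl' q hcovQ.1
      have hlt : LtRel L (hFun f W hmap p) (hFun f W hmap p') := by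
        refine ⟨hFun_mono covP.1.1, fun hyx => ?_⟩
        have := le0_fst hf hyx
        rw [hFun_fst, hFun_fst, e, e'] at this
        exact hneQ (le_antisymm hcovQ.1.1 this)
      have htg := ltRel_transGen_covRel hPO hlt
      have extract : ∀ a, Relation.TransGen (CovRel L) a (hFun f W hmap p') →
          a.1 = q → ∃ u u', CovRel L u u' ∧ u.1 = q ∧ u'.1 = q' := by
        intro a ha
        induction ha using Relation.TransGen.head_induction_on with
        | single h =>
          rename_i a'
          intro ha'
          exact ⟨a', hFun f W hmap p', h, ha', (hFun_fst f W hmap p').trans e'⟩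
        | head h' h ihh =>
          rename_i a' c
          intro ha'
          by_cases hcq : c.1 = q
          · exact ihh hcq
          · have hq1 : q ≤ c.1 := ha' ▸ le0_fst hf h'.1.1
            have hq2 : c.1 ≤ q' := by
              have := le0_fst hf (covle h)
              rwa [hFun_fst, e'] at this
            have hcq' : c.1 = q' := by
              by_contra hne'
              exact hcovQ.2 c.1 ⟨⟨hq1, fun h => hcq (le_antisymm h hq1)⟩,
                ⟨hq2, fun h => hne' (le_antisymm hq2 h)⟩⟩
            exact ⟨a', c, h', ha', hcq'⟩
      obtain ⟨u, u', hcov, hu, hu'⟩ :=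
        extract (hFun f W hmap p) htg ((hFun_fst f W hmap p).trans e)
      exact ⟨u, u', hcov, hu, hu'⟩
  -- the fibre inclusions
  have hIncl : ∀ q : Q, ConvexMap (fun a b : W q => a ≤ b) L
      (fun w => (⟨q, w⟩ : (q : Q) × W q)) ∧
      ∀ w w' : W q, L ⟨q, w⟩ ⟨q, w'⟩ ↔ w ≤ w' := by
    intro q
    refine ⟨⟨fun a b hab => le0_of_fiber_le hcontr hab, ?_⟩, fun w w' =>
      ⟨fun h => le0_fiber hf hcontr h w rfl, fun h => le0_of_fiber_le hcontr h⟩⟩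
    intro x y w hxw hwy
    obtain ⟨qw, w2⟩ := w
    have e : qw = q := le_antisymm (le0_fst hf hwy) (le0_fst hf hxw)
    subst e
    refine ⟨w2, ⟨le0_fiber hf hcontr hxw x rfl,
      le0_fiber hf hcontr hwy w2 rfl, rfl⟩, ?_⟩
    rintro p ⟨_, _, hp⟩
    exact sigma_mk_inj hp
  have hGlue : GlueContractionProp f W hmap L :=
    ⟨hPO, hHcontr, hGcontr, fun p => rfl, hIncl⟩
  constructor
  · refine ⟨L, hGlue, ?_⟩
    intro le hle
    funext x y
    apply propext
    constructor
    · -- le → L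
      intro hxy
      rcases eq_or_ne x y with rfl | hne
      · exact hPO.1 x
      · have hlt : LtRel le x y := ltRel_of_ne hle.1 hxy hne
        have htg := ltRel_transGen_covRel hle.1 hlt
        have : Relation.TransGen (R1 f W hmap) x y := by
          refine Relation.TransGen.mono ?_ _ _ htg
          intro u v hcov
          obtain ⟨p, p', hc, h1, h2⟩ := hle.2.1.2.2.2 u v hcov
          exact ⟨p, p', hc, h1, h2⟩
        exact Relation.TransGen.to_reflTransGen this
    · -- L → le
      intro hxy
      induction hxy with
      | refl => exact hle.1.1 x
      | tail _ hstep ih =>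
        rename_i b c
        obtain ⟨p, p', hc, h1, h2⟩ := hstep
        have hstep' : le (hFun f W hmap p) (hFun f W hmap p') :=
          hle.2.1.1 p p' hc.1.1
        rw [h1, h2] at hstep'
        exact hle.1.2.1 _ _ _ ih hstep'
  · -- connectedness
    intro le hle x _ y _
    obtain ⟨p, hp⟩ := hle.2.1.2.1 x
    obtain ⟨p', hp'⟩ := hle.2.1.2.1 y
    have hz := hPconn p (Set.mem_univ _) p' (Set.mem_univ _)
    rw [← hp, ← hp']
    exact Relation.ReflTransGen.lift
      (fun p : P => (⟨f p, hmap (f p) ⟨p, rfl⟩⟩ : (q : Q) × W q))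
      (fun a b hab => ⟨Set.mem_univ _, Set.mem_univ _, by
        rcases hab.2.2 with h | h
        · exact Or.inl (hle.2.1.1 a b h)
        · exact Or.inr (hle.2.1.1 b a h)⟩) _ _ hz
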